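/- Pauli twirl: let A = Σ_{(a,b) ∈ {0,1}²} α_{a,b} X^a Z^b be any 2 × 2 complex matrix expanded in the Pauli basis. Then for every 2 × 2 matrix ρ, (1/4) Σ_{(r,s) ∈ {0,1}²} (X^r Z^s)† A (X^r Z^s) ρ (X^r Z^s)† A† (X^r Z^s) = Σ_{(a,b)} |α_{a,b}|² (X^a Z^b) ρ (X^a Z^b)†. That is, conjugating an arbitrary attack by a uniformly random Pauli converts it into a classical mixture of Pauli attacks. -/

import Mathlib

open Matrix

/-- The single-qubit Pauli `X` matrix, indexed by `ZMod 2`. -/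
def X1 : Matrix (ZMod 2) (ZMod 2) ℂ :=
  Matrix.of fun i j => if i = j + 1 then 1 else 0

/-- The single-qubit Pauli `Z` matrix, indexed by `ZMod 2`. -/
def Z1 : Matrix (ZMod 2) (ZMod 2) ℂ :=
  Matrix.of fun i j => if i = j then (-1 : ℂ) ^ j.val else 0

private lemma z2cases : ∀ x : ZMod 2, x = 0 ∨ x = 1 := by decide

private lemma sum2 {M : Type*} [AddCommMonoid M] (f : ZMod 2 → M) :
    ∑ i, f i = f 0 + f 1 := by
  have : (Finset.univ : Finset (ZMod 2)) = {0, 1} := by decide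
  rw [this, Finset.sum_insert (by decide), Finset.sum_singleton]

private noncomputable def Pa (p : ZMod 2 × ZMod 2) : Matrix (ZMod 2) (ZMod 2) ℂ :=
  X1 ^ p.1.val * Z1 ^ p.2.val

private def ee (q p : ZMod 2 × ZMod 2) : ℂ :=
  (-1) ^ (q.1.val * p.2.val + q.2.val * p.1.val)

private lemma ee_star (q p : ZMod 2 × ZMod 2) : star (ee q p) = ee q p := by
  simp [ee]

private lemma ee_orth (p p' : ZMod 2 × ZMod 2) :
    ∑ q : ZMod 2 × ZMod 2, ee q p * ee q p' = if p = p' then 4 else 0 := by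
  obtain ⟨a, b⟩ := p; obtain ⟨a', b'⟩ := p'
  rcases z2cases a with rfl | rfl <;> rcases z2cases b with rfl | rfl <;>
    rcases z2cases a' with rfl | rfl <;> rcases z2cases b' with rfl | rfl <;>
  norm_num [ee, Fintype.sum_prod_type, sum2, ZMod.val_zero,
    show (1 : ZMod 2).val = 1 from rfl, Prod.ext_iff,
    show (0 : ZMod 2) ≠ 1 by decide, show (1 : ZMod 2) ≠ 0 by decide]

private lemma conj_lemma (q p : ZMod 2 × ZMod 2) :
    (Pa q)ᴴ * Pa p * Pa q = ee q p • Pa p := by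
  obtain ⟨r, s⟩ := q; obtain ⟨a, b⟩ := p
  rcases z2cases r with rfl | rfl <;> rcases z2cases s with rfl | rfl <;>
    rcases z2cases a with rfl | rfl <;> rcases z2cases b with rfl | rfl <;>
  simp only [Pa, ee, ZMod.val_zero, show (1 : ZMod 2).val = 1 from rfl, pow_zero, pow_one,
      one_mul, mul_one, Nat.mul_zero, Nat.zero_mul, Nat.mul_one, Nat.one_mul, Nat.add_zero,
      Nat.zero_add, Matrix.conjTranspose_one, Matrix.conjTranspose_mul, one_smul] <;>
  · ext i j
    rcases z2cases i with rfl | rfl <;> rcases z2cases j with rfl | rfl <;>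
      simp [X1, Z1, Matrix.mul_apply, sum2, Matrix.conjTranspose_apply, Matrix.smul_apply,
          show (0 : ZMod 2) ≠ 1 by decide, show (1 : ZMod 2) ≠ 0 by decide,
          show (1 : ZMod 2).val = 1 from rfl,
          show (1 : ZMod 2) + 1 = 0 by decide, show (0 : ZMod 2) + 1 = 1 by decide]

private lemma conj_lemmaH (q p : ZMod 2 × ZMod 2) :
    (Pa q)ᴴ * (Pa p)ᴴ * Pa q = ee q p • (Pa p)ᴴ := by
  have h := congrArg conjTranspose (conj_lemma q p)
  simp only [conjTranspose_mul, conjTranspose_conjTranspose, conjTranspose_smul, ee_star] at h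
  rw [mul_assoc]; exact h


/-- the Pauli twirl. For `A = ∑ α_{a,b} X^a Z^b`, conjugating the
attack `ρ ↦ A ρ A†` by a uniformly random Pauli converts it into the classical
mixture of Pauli attacks `∑ |α_{a,b}|² X^a Z^b ρ (X^a Z^b)†`. -/
theorem stmt_11 (α : ZMod 2 × ZMod 2 → ℂ) (A : Matrix (ZMod 2) (ZMod 2) ℂ)
    (hA : A = ∑ p : ZMod 2 × ZMod 2, α p • (X1 ^ p.1.val * Z1 ^ p.2.val))
    (ρ : Matrix (ZMod 2) (ZMod 2) ℂ) :
    (1 / 4 : ℂ) •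
        ∑ q : ZMod 2 × ZMod 2,
          (X1 ^ q.1.val * Z1 ^ q.2.val)ᴴ * A * (X1 ^ q.1.val * Z1 ^ q.2.val) * ρ *
            (X1 ^ q.1.val * Z1 ^ q.2.val)ᴴ * Aᴴ * (X1 ^ q.1.val * Z1 ^ q.2.val) =
      ∑ p : ZMod 2 × ZMod 2,
        (‖α p‖ ^ 2 : ℂ) •
          ((X1 ^ p.1.val * Z1 ^ p.2.val) * ρ * (X1 ^ p.1.val * Z1 ^ p.2.val)ᴴ) := by
  have hPa : ∀ p : ZMod 2 × ZMod 2, X1 ^ p.1.val * Z1 ^ p.2.val = Pa p := fun _ => rfl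
  simp only [hPa] at hA ⊢
  have hPA : ∀ q : ZMod 2 × ZMod 2,
      (Pa q)ᴴ * A * Pa q = ∑ p : ZMod 2 × ZMod 2, (ee q p * α p) • Pa p := by
    intro q
    rw [hA, Matrix.mul_sum, Matrix.sum_mul]
    refine Finset.sum_congr rfl fun p _ => ?_
    rw [mul_smul_comm, smul_mul_assoc, conj_lemma, smul_smul, mul_comm (α p)]
  have hAH : Aᴴ = ∑ p : ZMod 2 × ZMod 2, (starRingEnd ℂ) (α p) • (Pa p)ᴴ := by
    rw [hA, conjTranspose_sum]
    simp [Matrix.conjTranspose_smul]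
  have hPAH : ∀ q : ZMod 2 × ZMod 2,
      (Pa q)ᴴ * Aᴴ * Pa q
        = ∑ p : ZMod 2 × ZMod 2, (ee q p * (starRingEnd ℂ) (α p)) • (Pa p)ᴴ := by
    intro q
    rw [hAH, Matrix.mul_sum, Matrix.sum_mul]
    refine Finset.sum_congr rfl fun p _ => ?_
    rw [mul_smul_comm, smul_mul_assoc, conj_lemmaH, smul_smul, mul_comm ((starRingEnd ℂ) (α p))]
  have expand : ∀ q : ZMod 2 × ZMod 2,
      (Pa q)ᴴ * A * Pa q * ρ * (Pa q)ᴴ * Aᴴ * Pa q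
        = ∑ p : ZMod 2 × ZMod 2, ∑ p' : ZMod 2 × ZMod 2,
            ((ee q p * ee q p') * (α p * (starRingEnd ℂ) (α p'))) •
              (Pa p * ρ * (Pa p')ᴴ) := by
    intro q
    have h1 : (Pa q)ᴴ * A * Pa q * ρ * (Pa q)ᴴ * Aᴴ * Pa q
        = ((Pa q)ᴴ * A * Pa q) * ρ * ((Pa q)ᴴ * Aᴴ * Pa q) := by
      simp only [mul_assoc]
    rw [h1, hPA q, hPAH q]
    rw [Matrix.sum_mul, Matrix.sum_mul]
    refine Finset.sum_congr rfl fun p _ => ?_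
    rw [Matrix.mul_sum]
    refine Finset.sum_congr rfl fun p' _ => ?_
    rw [smul_mul_assoc, smul_mul_assoc, mul_smul_comm, smul_smul]
    congr 1
    ring
  simp only [expand]
  rw [Finset.sum_comm]
  have step : ∀ p : ZMod 2 × ZMod 2,
      (∑ q : ZMod 2 × ZMod 2, ∑ p' : ZMod 2 × ZMod 2,
        ((ee q p * ee q p') * (α p * (starRingEnd ℂ) (α p'))) • (Pa p * ρ * (Pa p')ᴴ))
      = (4 * (α p * (starRingEnd ℂ) (α p))) • (Pa p * ρ * (Pa p)ᴴ) := by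
    intro p
    rw [Finset.sum_comm]
    have : ∀ p' : ZMod 2 × ZMod 2,
        (∑ q : ZMod 2 × ZMod 2,
          ((ee q p * ee q p') * (α p * (starRingEnd ℂ) (α p'))) • (Pa p * ρ * (Pa p')ᴴ))
        = ((if p = p' then (4:ℂ) else 0) * (α p * (starRingEnd ℂ) (α p'))) •
            (Pa p * ρ * (Pa p')ᴴ) := by
      intro p'
      rw [← Finset.sum_smul, ← Finset.sum_mul, ee_orth]
    simp only [this, ite_mul, zero_mul, ite_smul, zero_smul]
    rw [Finset.sum_ite_eq]
    simp
  simp only [step]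
  rw [Finset.smul_sum]
  refine Finset.sum_congr rfl fun p _ => ?_
  rw [smul_smul]
  congr 1
  rw [Complex.mul_conj, Complex.normSq_eq_norm_sq]
  push_cast
  ring
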